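/- Let k > 0 and φ > 0, set c0 = k·coth(φ), and let u(ξ) = k·sinh(φ)/(cos(kξ) + cosh(φ)). For λ ∈ ℝ define m⁺(ξ) = [(2λ + c0 − k) + (2λ + c0 + k)e^{i k ξ − φ}]/(1 + e^{i k ξ − φ}) and m⁻(ξ) = [(2λ + c0 − k) + (2λ + c0 + k)e^{i k ξ + φ}]/(1 + e^{i k ξ + φ}). Then the denominators are nonzero for all real ξ and the pair (m⁺, m⁻) satisfies the stationary first Lax equation i (m⁺)'(ξ) + λ(m⁺(ξ) − m⁻(ξ)) + u(ξ)·m⁺(ξ) = 0 for every real ξ and every λ ∈ ℝ. -/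

import Mathlib

set_option maxHeartbeats 2000000


/-- the pair `(m⁺, m⁻)` of `2π/k`-periodic Lax eigenfunctions of
the traveling periodic wave of the Benjamin–Ono equation satisfies the
stationary first Lax equation `i (m⁺)' + λ(m⁺ − m⁻) + u·m⁺ = 0` for every
real `ξ` and every real spectral parameter `λ`. -/
theorem stationary_lax_equation (k φ c0 : ℝ) (hk : 0 < k) (hφ : 0 < φ)
    (hc0 : c0 = k * Real.cosh φ / Real.sinh φ)
    (u : ℝ → ℝ)
    (hu : ∀ ξ : ℝ, u ξ = k * Real.sinh φ / (Real.cos (k * ξ) + Real.cosh φ)) :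
    ∀ lam : ℝ, ∀ mp mm : ℝ → ℂ,
      (∀ ξ : ℝ, mp ξ =
        ((2 * lam + c0 - k) + (2 * lam + c0 + k) * Complex.exp (Complex.I * (k * ξ) - φ))
          / (1 + Complex.exp (Complex.I * (k * ξ) - φ))) →
      (∀ ξ : ℝ, mm ξ =
        ((2 * lam + c0 - k) + (2 * lam + c0 + k) * Complex.exp (Complex.I * (k * ξ) + φ))
          / (1 + Complex.exp (Complex.I * (k * ξ) + φ))) →
      ∀ ξ : ℝ,
        (1 + Complex.exp (Complex.I * (k * ξ) - φ)) ≠ 0 ∧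
        (1 + Complex.exp (Complex.I * (k * ξ) + φ)) ≠ 0 ∧
        Complex.I * deriv mp ξ + lam * (mp ξ - mm ξ) + (u ξ : ℂ) * mp ξ = 0 := by
  intro lam mp mm hmp hmm ξ
  -- denominators nonzero
  have hDm : (1 : ℂ) + Complex.exp (Complex.I * (k * ξ) - φ) ≠ 0 := by
    intro h
    have habs : ‖Complex.exp (Complex.I * (k * ξ) - φ)‖ = Real.exp (-φ) := by
      rw [Complex.norm_exp]; simp
    have h1 : Complex.exp (Complex.I * (k * ξ) - φ) = -1 := by linear_combination h
    rw [h1] at habs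
    simp at habs
    have : Real.exp (-φ) < 1 := Real.exp_lt_one_iff.2 (by linarith)
    rw [← habs] at this; norm_num at this
  have hDp : (1 : ℂ) + Complex.exp (Complex.I * (k * ξ) + φ) ≠ 0 := by
    intro h
    have habs : ‖Complex.exp (Complex.I * (k * ξ) + φ)‖ = Real.exp φ := by
      rw [Complex.norm_exp]; simp
    have h1 : Complex.exp (Complex.I * (k * ξ) + φ) = -1 := by linear_combination h
    rw [h1] at habs
    simp at habs
    have : 1 < Real.exp φ := Real.one_lt_exp_iff.2 hφ
    rw [habs] at this; norm_num at this
  refine ⟨hDm, hDp, ?_⟩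
  -- abbreviations
  set a : ℝ := Real.exp φ with ha
  have ha1 : (1:ℝ) < a := Real.one_lt_exp_iff.2 hφ
  have haR : (0:ℝ) < a := lt_trans one_pos ha1
  have ha0 : (a:ℂ) ≠ 0 := by exact_mod_cast ne_of_gt haR
  set E : ℂ := Complex.exp (Complex.I * (k * ξ)) with hE
  have hE0 : E ≠ 0 := Complex.exp_ne_zero _
  -- exponential identities
  have hEm : Complex.exp (Complex.I * (k * ξ) - φ) = E * (a:ℂ)⁻¹ := by
    rw [Complex.exp_sub, div_eq_mul_inv, hE, ha]
    norm_num [Complex.ofReal_exp]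
  have hEp : Complex.exp (Complex.I * (k * ξ) + φ) = E * (a:ℂ) := by
    rw [Complex.exp_add, hE, ha]
    norm_num [Complex.ofReal_exp]
  -- trig identities
  have hsinhR : Real.sinh φ = (a ^ 2 - 1) / (2 * a) := by
    rw [Real.sinh_eq, Real.exp_neg]
    field_simp
    ring
  have hcoshR : Real.cosh φ = (a ^ 2 + 1) / (2 * a) := by
    rw [Real.cosh_eq, Real.exp_neg]
    field_simp
    ring
  have hcosC : Complex.cos ((k:ℂ) * (ξ:ℂ)) = (E * E + 1) / (2 * E) := by
    rw [Complex.cos]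
    have h1 : ((k:ℂ) * (ξ:ℂ)) * Complex.I = Complex.I * (k * ξ) := by ring
    have h2 : -((k:ℂ) * (ξ:ℂ)) * Complex.I = -(Complex.I * (k * ξ)) := by ring
    rw [h1, h2, Complex.exp_neg, ← hE]
    rw [div_eq_div_iff two_ne_zero (mul_ne_zero two_ne_zero hE0)]
    field_simp
  have ha2 : ((a:ℂ)^2 - 1) ≠ 0 := by
    have h : (0:ℝ) < a ^ 2 - 1 := by nlinarith
    have h2 : ((a ^ 2 - 1 : ℝ) : ℂ) ≠ 0 := by exact_mod_cast ne_of_gt h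
    push_cast at h2
    exact h2
  have h2a : (2 * (a:ℂ)) ≠ 0 := mul_ne_zero two_ne_zero ha0
  -- rewritten denominators
  have hDm' : (1:ℂ) + E * (a:ℂ)⁻¹ ≠ 0 := by rw [← hEm]; exact hDm
  have hDp' : (1:ℂ) + E * (a:ℂ) ≠ 0 := by rw [← hEp]; exact hDp
  -- u in terms of a and E
  have hdposR : (0:ℝ) < Real.cos (k * ξ) + Real.cosh φ := by
    have hc1 : -1 ≤ Real.cos (k * ξ) := Real.neg_one_le_cos (k * ξ)
    have hc2 : 1 < (a ^ 2 + 1) / (2 * a) := by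
      rw [lt_div_iff₀ (by positivity)]
      nlinarith
    rw [hcoshR]; linarith
  have hden : (E * E + 1) / (2 * E) + ((a:ℂ) ^ 2 + 1) / (2 * (a:ℂ)) ≠ 0 := by
    have heq : (E * E + 1) / (2 * E) + ((a:ℂ) ^ 2 + 1) / (2 * (a:ℂ))
        = ((Real.cos (k * ξ) + Real.cosh φ : ℝ) : ℂ) := by
      push_cast
      rw [hcosC, ← Complex.ofReal_cosh, hcoshR]
      push_cast
      ring
    rw [heq]
    exact_mod_cast ne_of_gt hdposR
  have haE : (a:ℂ) + E ≠ 0 := by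
    have hne := mul_ne_zero ha0 hDm'
    intro h; apply hne
    field_simp
    linear_combination h
  have huC : ((u ξ : ℝ) : ℂ)
      = (k:ℂ) * ((a:ℂ)^2 - 1) * E / (((a:ℂ) + E) * (1 + E * (a:ℂ))) := by
    rw [hu ξ, hsinhR]
    push_cast
    rw [hcosC, ← Complex.ofReal_cosh, hcoshR]
    push_cast
    rw [div_eq_div_iff hden (mul_ne_zero haE hDp')]
    field_simp [ha0, hE0]
    ring
  have hc0C : ((c0:ℝ) : ℂ) = (k:ℂ) * ((a:ℂ)^2 + 1) / ((a:ℂ)^2 - 1) := by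
    rw [hc0, hsinhR, hcoshR]
    push_cast
    rw [div_eq_div_iff (div_ne_zero ha2 h2a) ha2]
    field_simp
  -- derivative of mp
  have hg : HasDerivAt (fun ξ : ℝ => Complex.I * (k * ξ) - (φ : ℂ)) (Complex.I * k) ξ := by
    have he : HasDerivAt (fun w : ℂ => Complex.I * ((k : ℂ) * w) - (φ : ℂ)) (Complex.I * k) ξ := by
      simpa using (((hasDerivAt_id ((ξ : ℝ) : ℂ)).const_mul ((k:ℂ))).const_mul Complex.I).sub_const (φ : ℂ)
    exact he.comp_ofReal
  have hexp := hg.cexp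
  have hN : HasDerivAt
      (fun ξ : ℝ => (2 * (lam:ℂ) + c0 - k) + (2 * (lam:ℂ) + c0 + k) * Complex.exp (Complex.I * (k * ξ) - φ))
      ((2 * (lam:ℂ) + c0 + k) * (Complex.exp (Complex.I * (k * ξ) - φ) * (Complex.I * k))) ξ := by
    simpa using (hexp.const_mul ((2 * (lam:ℂ) + c0 + k))).const_add ((2 * (lam:ℂ) + c0 - k))
  have hDder : HasDerivAt (fun ξ : ℝ => (1 : ℂ) + Complex.exp (Complex.I * (k * ξ) - φ))
      (Complex.exp (Complex.I * (k * ξ) - φ) * (Complex.I * k)) ξ := by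
    simpa using hexp.const_add (1 : ℂ)
  have hder : deriv mp ξ =
      (((2 * (lam:ℂ) + c0 + k) * (Complex.exp (Complex.I * (k * ξ) - φ) * (Complex.I * k))) *
          (1 + Complex.exp (Complex.I * (k * ξ) - φ)) -
        ((2 * (lam:ℂ) + c0 - k) + (2 * (lam:ℂ) + c0 + k) * Complex.exp (Complex.I * (k * ξ) - φ)) *
          (Complex.exp (Complex.I * (k * ξ) - φ) * (Complex.I * k))) /
        (1 + Complex.exp (Complex.I * (k * ξ) - φ)) ^ 2 := by
    rw [funext hmp]
    exact (hN.div hDder hDm).deriv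
  have hIder : Complex.I * deriv mp ξ = -(2 * (k:ℂ)^2 * (a:ℂ) * E) / (((a:ℂ) + E)^2) := by
    rw [hder, hEm, ← mul_div_assoc,
      div_eq_div_iff (pow_ne_zero 2 hDm') (pow_ne_zero 2 haE)]
    field_simp [ha0]
    ring_nf
    simp only [Complex.I_sq]
    ring
  have hmpC : mp ξ =
      ((2 * (lam:ℂ) + c0 - k) * (a:ℂ) + (2 * (lam:ℂ) + c0 + k) * E) / ((a:ℂ) + E) := by
    rw [hmp ξ, hEm, div_eq_div_iff hDm' haE]
    field_simp [ha0]
  -- assemble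
  rw [hIder, hmpC, hmm ξ, hEp, huC, hc0C]
  field_simp [haE, hDp', ha2, show (1:ℂ) + (a:ℂ) * E ≠ 0 by rw [mul_comm]; exact hDp']
  ring
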